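/- Let F be a field and B = (b_1, ..., b_k) ∈ F^{k×k} a non-singular matrix with columns b_1,...,b_k. Then there is a permutation π of {1,...,k} such that the matrix A = (b_{π(1)}, ..., b_{π(k)}) satisfies: for every i ∈ {1,...,k}, A_{ii} ≠ 0 and det(A_i) ≠ 0, where A_i denotes the top-left i×i submatrix of A. -/

import Mathlib

private lemma aux4 {F : Type*} [Field F] :
    ∀ (k : ℕ) (B : Matrix (Fin k) (Fin k) F), B.det ≠ 0 →
    ∃ π : Equiv.Perm (Fin k),
      (∀ i, (B.submatrix id π) i i ≠ 0) ∧
      ∀ (n : ℕ) (h : n ≤ k),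
        ((B.submatrix id π).submatrix (Fin.castLE h) (Fin.castLE h)).det ≠ 0 := by
  intro k
  induction k with
  | zero =>
    intro B hB
    refine ⟨1, fun i => i.elim0, fun n h => ?_⟩
    have hn : n = 0 := Nat.le_zero.mp h
    subst hn
    simp [Matrix.det_fin_zero]
  | succ k ih =>
    intro B hB
    have hexp := Matrix.det_succ_row B (Fin.last k)
    have hex : ∃ j, B (Fin.last k) j ≠ 0 ∧
        (B.submatrix (Fin.last k).succAbove j.succAbove).det ≠ 0 := by
      by_contra hc
      push_neg at hc
      apply hB
      rw [hexp]
      apply Finset.sum_eq_zero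
      intro j _
      by_cases h0 : B (Fin.last k) j = 0
      · simp [h0]
      · have h1 := hc j h0
        rw [Fin.succAbove_last] at h1
        simp [h1]
    obtain ⟨j, hj1, hj2⟩ := hex
    set C : Matrix (Fin k) (Fin k) F := B.submatrix Fin.castSucc j.succAbove with hC
    have hCdet : C.det ≠ 0 := by
      simpa [hC, Fin.succAbove_last] using hj2
    obtain ⟨σ, hσdiag, hσdet⟩ := ih C hCdet
    set π : Equiv.Perm (Fin (k + 1)) :=
      (finSuccEquivLast.trans (Equiv.optionCongr σ)).trans (finSuccEquiv' j).symm with hπ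
    have hπc : ∀ i : Fin k, π i.castSucc = j.succAbove (σ i) := by
      intro i; simp [hπ]
    have hπl : π (Fin.last k) = j := by simp [hπ]
    refine ⟨π, ?_, ?_⟩
    · intro i
      induction i using Fin.lastCases with
      | last => simpa [hπl] using hj1
      | cast l =>
        have := hσdiag l
        simpa [hπc, hC] using this
    · intro n h
      by_cases hn : n ≤ k
      · have heq : (B.submatrix id π).submatrix (Fin.castLE h) (Fin.castLE h) =
            (C.submatrix id σ).submatrix (Fin.castLE hn) (Fin.castLE hn) := by
          ext a b
          have ha : Fin.castLE h a = (Fin.castLE hn a).castSucc := by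
            apply Fin.ext; simp
          have hb : Fin.castLE h b = (Fin.castLE hn b).castSucc := by
            apply Fin.ext; simp
          simp only [Matrix.submatrix_apply, id_eq]
          rw [ha, hb, hπc, hC]
          rfl
        rw [heq]
        exact hσdet n hn
      · have hn' : n = k + 1 := by omega
        subst hn'
        have heq : (B.submatrix id π).submatrix (Fin.castLE h) (Fin.castLE h) =
            B.submatrix id π := by
          ext a b
          have ha : Fin.castLE h a = a := by apply Fin.ext; simp
          have hb : Fin.castLE h b = b := by apply Fin.ext; simp
          simp [Matrix.submatrix_apply, ha, hb]
        rw [heq, Matrix.det_permute']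
        refine mul_ne_zero ?_ hB
        rcases Int.units_eq_one_or (Equiv.Perm.sign π) with hs | hs <;> simp [hs]

theorem stmt4 {F : Type*} [Field F] {k : ℕ} (B : Matrix (Fin k) (Fin k) F)
    (hB : B.det ≠ 0) :
    ∃ π : Equiv.Perm (Fin k),
      (∀ i : Fin k, B.submatrix id π i i ≠ 0) ∧
      (∀ i : Fin k,
        ((B.submatrix id π).submatrix (Fin.castLE i.isLt) (Fin.castLE i.isLt)).det ≠ 0) := by
  obtain ⟨π, h1, h2⟩ := aux4 k B hB
  refine ⟨π, h1, fun i => ?_⟩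
  exact h2 _ i.isLt
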